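/- Let R > 0. Every nonempty connected set E ∈ 𝒰_R ⊆ ℝⁿ satisfies 𝓛ⁿ(E) ≥ m · 𝓛ⁿ(B(0,R)), where m is the integer part of diam(E)/(4R). Consequently, if {E_h} is a sequence of connected sets in 𝒰_R with diam(E_h) → ∞, then 𝓛ⁿ(E_h) → ∞. -/

import Mathlib

open Set Metric MeasureTheory Filter Topology ENNReal NNReal

noncomputable section

abbrev En (n : ℕ) := EuclideanSpace ℝ (Fin n)

def sphereCond (n : ℕ) (R : ℝ) (E : Set (En n)) : Prop :=
  ∀ p ∈ frontier E, ∃ p' p'' : En n, dist p p' = R ∧ dist p p'' = R ∧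
    ball p' R ⊆ E ∧ ball p'' R ∩ E = ∅

def UR (n : ℕ) (R : ℝ) : Set (Set (En n)) :=
  {E | IsClosed E ∧ Bornology.IsBounded E ∧ sphereCond n R E}

def KConv {X : Type*} [MetricSpace X] (F : ℕ → Set X) (F₀ : Set X) : Prop :=
  (∀ (p : X) (φ : ℕ → ℕ) (x : ℕ → X), StrictMono φ → (∀ k, x k ∈ F (φ k)) →
    Tendsto x atTop (𝓝 p) → p ∈ F₀) ∧
  (∀ p ∈ F₀, ∃ x : ℕ → X, (∀ h, x h ∈ F h) ∧ Tendsto x atTop (𝓝 p))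

def L1Conv {n : ℕ} (F : ℕ → Set (En n)) (E : Set (En n)) : Prop :=
  Tendsto (fun h => ∫ x, |(F h).indicator (fun _ => (1:ℝ)) x - E.indicator (fun _ => (1:ℝ)) x|)
    atTop (𝓝 0)

open RealInnerProductSpace

lemma seg_cross {n : ℕ} {E : Set (En n)} {x y : En n} (hx : x ∈ E) (hy : y ∉ E) :
    ∃ p ∈ frontier E, dist x p ≤ dist x y := by
  by_cases hfx : x ∈ frontier E
  · exact ⟨x, hfx, by simp [dist_nonneg]⟩
  by_cases hfy : y ∈ frontier E
  · exact ⟨y, hfy, le_rfl⟩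
  by_cases hseg : ∃ p ∈ segment ℝ x y, p ∈ frontier E
  · obtain ⟨p, hps, hpf⟩ := hseg
    refine ⟨p, hpf, ?_⟩
    have := dist_add_dist_of_mem_segment hps
    linarith [dist_nonneg (x := p) (y := y)]
  · exfalso
    push_neg at hseg
    have hconv : IsPreconnected (segment ℝ x y) := (convex_segment x y).isPreconnected
    have hmem : ∀ z, z ∈ closure E → z ∉ frontier E → z ∈ interior E := by
      intro z h1 h2
      by_contra h3
      exact h2 ⟨h1, h3⟩
    have hxint : x ∈ interior E := hmem x (subset_closure hx) hfx
    have hyext : y ∉ closure E := fun hyc => hy (interior_subset (hmem y hyc hfy))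
    have hsub : segment ℝ x y ⊆ interior E ∪ (closure E)ᶜ := by
      intro z hz
      by_cases hzc : z ∈ closure E
      · exact Or.inl (hmem z hzc (hseg z hz))
      · exact Or.inr hzc
    obtain ⟨z, hz⟩ := hconv (interior E) (closure E)ᶜ isOpen_interior
      (isClosed_closure.isOpen_compl) hsub
      ⟨x, left_mem_segment ℝ x y, hxint⟩ ⟨y, right_mem_segment ℝ x y, hyext⟩
    exact hz.2.2 (interior_subset_closure hz.2.1)

set_option maxHeartbeats 1000000 in
lemma ball_cover {n : ℕ} {R : ℝ} (hR : 0 < R) {E : Set (En n)} (hE : E ∈ UR n R)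
    {x : En n} (hx : x ∈ E) : ∃ c, dist x c ≤ R ∧ ball c R ⊆ E := by
  obtain ⟨hclosed, hbdd, hsph⟩ := hE
  by_cases hball : ball x R ⊆ E
  · exact ⟨x, by simp [hR.le], hball⟩
  obtain ⟨y, hyb, hyE⟩ := not_subset.1 hball
  obtain ⟨q, hqf, hqd⟩ := seg_cross hx hyE
  have hfc : IsCompact (frontier E) :=
    isCompact_of_isClosed_isBounded isClosed_frontier (hbdd.subset hclosed.frontier_subset)
  set d := infDist x (frontier E) with hd
  have hdy : d < R := by
    have h1 : d ≤ dist x q := infDist_le_dist_of_mem hqf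
    have h2 : dist x y < R := mem_ball'.1 hyb
    linarith
  obtain ⟨p, hpf, hpd⟩ := hfc.exists_infDist_eq_dist ⟨q, hqf⟩ x
  have hd0 : 0 ≤ d := infDist_nonneg
  have hballd : ball x d ⊆ E := by
    intro z hz
    by_contra hzE
    obtain ⟨q', hq'f, hq'd⟩ := seg_cross hx hzE
    have h1 : d ≤ dist x q' := infDist_le_dist_of_mem hq'f
    have h2 : dist x z < d := mem_ball'.1 hz
    linarith
  obtain ⟨p', p'', hp', hp'', hint, hext⟩ := hsph p hpf
  have hdisj : Disjoint (ball p' R) (ball p'' R) := by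
    rw [disjoint_comm, disjoint_left]
    intro z hz1 hz2
    have : z ∈ ball p'' R ∩ E := ⟨hz1, hint hz2⟩
    rw [hext] at this
    exact this
  have hsep : R + R ≤ dist p' p'' := (disjoint_ball_ball_iff hR hR).1 hdisj
  have h2R : dist p' p'' = 2 * R := by
    have := dist_triangle p' p p''
    rw [dist_comm p' p] at this
    linarith [hp', hp'']
  have hxp'' : d + R ≤ dist x p'' := by
    rcases eq_or_lt_of_le hd0 with h0 | h0
    · have hnm : x ∉ ball p'' R := by
        intro hmem
        have : x ∈ ball p'' R ∩ E := ⟨hmem, hx⟩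
        rw [hext] at this
        exact this
      rw [mem_ball] at hnm
      push_neg at hnm
      rw [← h0, zero_add]
      exact hnm
    · have hdisj2 : Disjoint (ball x d) (ball p'' R) := by
        rw [disjoint_left]
        intro z hz1 hz2
        have : z ∈ ball p'' R ∩ E := ⟨hz2, hballd hz1⟩
        rw [hext] at this
        exact this
      exact (disjoint_ball_ball_iff h0 hR).1 hdisj2
  -- vector computations
  have na : ‖p' - p‖ = R := by rw [← dist_eq_norm, dist_comm]; exact hp'
  have nb : ‖p'' - p‖ = R := by rw [← dist_eq_norm, dist_comm]; exact hp''
  have nab : ‖(p' - p) - (p'' - p)‖ = 2 * R := by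
    rw [sub_sub_sub_cancel_right, ← dist_eq_norm]; exact h2R
  have key : p' - p = -(p'' - p) := by
    have e1 := norm_add_sq_real (p' - p) (p'' - p)
    have e2 := norm_sub_sq_real (p' - p) (p'' - p)
    have hz : ‖(p' - p) + (p'' - p)‖ ^ 2 = 0 := by nlinarith
    have hz2 : (p' - p) + (p'' - p) = 0 := by
      have : ‖(p' - p) + (p'' - p)‖ = 0 := by nlinarith [norm_nonneg ((p' - p) + (p'' - p))]
      exact norm_eq_zero.1 this
    exact eq_neg_of_add_eq_zero_left hz2
  have hxpd : ‖x - p‖ = d := by rw [← dist_eq_norm]; exact hpd.symm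
  have hxp2 : d + R ≤ ‖x - p''‖ := by rw [← dist_eq_norm]; exact hxp''
  have e3 := norm_sub_sq_real (x - p) (p'' - p)
  rw [sub_sub_sub_cancel_right] at e3
  have hsq : (d + R) * (d + R) ≤ ‖x - p''‖ * ‖x - p''‖ :=
    mul_self_le_mul_self (by linarith) hxp2
  have inner_le : ((inner ℝ (x - p) (p'' - p) : ℝ)) ≤ -(d*R) := by nlinarith [e3, hxpd, nb, hsq]
  have hed : x - p' = (x - p) + (p'' - p) := by
    have h5 : x - p' = (x - p) - (p' - p) := (sub_sub_sub_cancel_right x p' p).symm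
    rw [key, sub_neg_eq_add] at h5
    exact h5
  have e4 := norm_add_sq_real (x - p) (p'' - p)
  rw [← hed] at e4
  have hfin : ‖x - p'‖ ^ 2 ≤ (R - d) ^ 2 := by nlinarith [e4, inner_le, hxpd, nb]
  have hfin2 : ‖x - p'‖ ≤ R - d := by nlinarith [norm_nonneg (x - p'), hfin]
  refine ⟨p', ?_, hint⟩
  rw [dist_eq_norm]
  linarith

set_option maxHeartbeats 1000000 in
lemma main_part1 {n : ℕ} {R : ℝ} (hR : 0 < R) :
    ∀ E ∈ UR n R, E.Nonempty → IsPreconnected E →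
      (⌊Metric.diam E / (4 * R)⌋₊ : ℝ≥0∞) * volume (ball (0 : En n) R) ≤ volume E := by
  intro E hE hne hconn
  set m := ⌊Metric.diam E / (4 * R)⌋₊ with hm
  rcases Nat.eq_zero_or_pos m with h0 | hm1
  · simp [h0]
  have hml : (m : ℝ) ≤ Metric.diam E / (4 * R) := Nat.floor_le (by positivity)
  have h4Rm : 4 * R * m ≤ Metric.diam E := by
    rw [le_div_iff₀ (by positivity)] at hml; linarith
  have hm1' : (1 : ℝ) ≤ m := by exact_mod_cast hm1
  obtain ⟨a, ha, b, hb, hab⟩ : ∃ a ∈ E, ∃ b ∈ E, 4 * R * m - 3 * R < dist a b := by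
    by_contra hcon
    push_neg at hcon
    have : Metric.diam E ≤ 4 * R * m - 3 * R :=
      diam_le_of_forall_dist_le (by nlinarith) hcon
    linarith
  have hxek : ∀ k : ℕ, ∃ x, k < m → (x ∈ E ∧ dist a x = 4 * R * k + R) := by
    intro k
    by_cases hk : k < m
    · have hk1 : (k : ℝ) + 1 ≤ m := by exact_mod_cast hk
      have hmem : (4 * R * k + R) ∈ Icc (dist a a) (dist a b) := by
        rw [dist_self]
        constructor
        · positivity
        · nlinarith
      obtain ⟨x, hxE, hxd⟩ := hconn.intermediate_value ha hb
        ((continuous_const.dist continuous_id).continuousOn) hmem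
      exact ⟨x, fun _ => ⟨hxE, hxd⟩⟩
    · exact ⟨a, fun h => absurd h hk⟩
  choose x hx using hxek
  have hck : ∀ k : ℕ, ∃ c, k < m → dist (x k) c ≤ R ∧ ball c R ⊆ E := by
    intro k
    by_cases hk : k < m
    · obtain ⟨c, h1, h2⟩ := ball_cover hR hE ((hx k hk).1)
      exact ⟨c, fun _ => ⟨h1, h2⟩⟩
    · exact ⟨a, fun h => absurd h hk⟩
  choose c hc using hck
  have hcc : ∀ j k, j < m → k < m → j ≠ k → R + R ≤ dist (c j) (c k) := by
    intro j k hj hk hjk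
    have h1 := abs_dist_sub_le (x j) (x k) a
    rw [dist_comm (x j) a, dist_comm (x k) a, (hx j hj).2, (hx k hk).2] at h1
    have h4 : 4 * R ≤ dist (x j) (x k) := by
      rcases lt_or_gt_of_ne hjk with h | h
      · have hc1 : (j : ℝ) + 1 ≤ k := by exact_mod_cast h
        have := neg_abs_le (4 * R * j + R - (4 * R * k + R))
        nlinarith
      · have hc1 : (k : ℝ) + 1 ≤ j := by exact_mod_cast h
        have := le_abs_self (4 * R * j + R - (4 * R * k + R))
        nlinarith
    have ht := dist_triangle4 (x j) (c j) (c k) (x k)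
    have e1 := (hc j hj).1
    have e2 := (hc k hk).1
    rw [dist_comm (c k) (x k)] at ht
    linarith
  have hdisj : (↑(Finset.range m) : Set ℕ).PairwiseDisjoint (fun k => ball (c k) R) := by
    intro j hj k hk hjk
    simp only [Finset.coe_range, mem_Iio] at hj hk
    exact ball_disjoint_ball (hcc j k hj hk hjk)
  have hsum := measure_biUnion_finset (μ := volume) hdisj (fun k _ => measurableSet_ball)
  have hsub : (⋃ k ∈ Finset.range m, ball (c k) R) ⊆ E := by
    intro z hz
    simp only [Finset.mem_range, mem_iUnion] at hz
    obtain ⟨k, hk, hzk⟩ := hz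
    exact (hc k hk).2 hzk
  calc (m : ℝ≥0∞) * volume (ball (0 : En n) R)
      = ∑ k ∈ Finset.range m, volume (ball (c k) R) := by
        rw [Finset.sum_congr rfl
          (fun k _ => MeasureTheory.Measure.addHaar_ball_center volume (c k) R)]
        rw [Finset.sum_const, Finset.card_range, nsmul_eq_mul]
    _ = volume (⋃ k ∈ Finset.range m, ball (c k) R) := hsum.symm
    _ ≤ volume E := measure_mono hsub

theorem volume_lower_bound_of_diam (n : ℕ) (hn : 2 ≤ n) (R : ℝ) (hR : 0 < R) :
    (∀ E ∈ UR n R, E.Nonempty → IsPreconnected E →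
      (⌊Metric.diam E / (4 * R)⌋₊ : ℝ≥0∞) * volume (ball (0 : En n) R) ≤ volume E) ∧
    (∀ Eh : ℕ → Set (En n), (∀ h, Eh h ∈ UR n R) → (∀ h, (Eh h).Nonempty) →
      (∀ h, IsPreconnected (Eh h)) →
      Tendsto (fun h => Metric.diam (Eh h)) atTop atTop →
      Tendsto (fun h => volume (Eh h)) atTop (𝓝 ⊤)) := by
  refine ⟨main_part1 hR, ?_⟩
  intro Eh hUR hne hconn hdiam
  rw [ENNReal.tendsto_nhds_top_iff_nnreal]
  intro C
  set v := volume (ball (0 : En n) R) with hv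
  have hv0 : v ≠ 0 := (measure_ball_pos volume 0 hR).ne'
  have hvt : v ≠ ⊤ := measure_ball_lt_top.ne
  obtain ⟨k, hk⟩ := ENNReal.exists_nat_gt
    (show (C : ℝ≥0∞) / v ≠ ⊤ from (ENNReal.div_lt_top ENNReal.coe_ne_top hv0).ne)
  have hCk : (C : ℝ≥0∞) < k * v := by
    calc (C : ℝ≥0∞) = (C : ℝ≥0∞) / v * v := (ENNReal.div_mul_cancel hv0 hvt).symm
      _ < k * v := by
        rw [mul_comm _ v, mul_comm _ v]; exact ENNReal.mul_lt_mul_right hv0 hvt hk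
  filter_upwards [hdiam.eventually_ge_atTop (4 * R * k)] with h hh
  have hfloor : k ≤ ⌊Metric.diam (Eh h) / (4 * R)⌋₊ := by
    apply Nat.le_floor
    rw [le_div_iff₀ (by positivity)]
    linarith
  calc (C : ℝ≥0∞) < k * v := hCk
    _ ≤ (⌊Metric.diam (Eh h) / (4 * R)⌋₊ : ℝ≥0∞) * v := by
        exact mul_le_mul_left (by exact_mod_cast hfloor) v
    _ ≤ volume (Eh h) := main_part1 hR (Eh h) (hUR h) (hne h) (hconn h)
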